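/- arXiv:1109.2296 — 2 statements merged into one kernel-verified Lean document; each statement's English description precedes it below -/
import Mathlib

section
/- Let G = (V, E) be a connected undirected graph on n nodes with diameter D and node rewards r : V → ℝ. For each ordered pair of distinct nodes (i, j) fix a shortest path π_{ij} from i to j. Suppose each edge of G is sampled T times, all samples of all edges being mutually independent, each sample of edge (k,l) taking values in [−1,1] with mean r_l − r_k; let Ê^{kl} denote the empirical average of edge (k,l), and for each pair (i,j) let Ê_{π_{ij}} = Σ_{(k,l) ∈ π_{ij}} Ê^{kl}. Fix ε > 0 and δ ∈ (0,1). If T ≥ (4D/ε²)·log(2n²/δ), then with probability at least 1 − δ, simultaneously for every ordered pair (i,j) of distinct nodes, | Ê_{π_{ij}} − (r_j − r_i) | ≤ ε. -/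
open MeasureTheory ProbabilityTheory

lemma NNE_cosh_pos {m : ℝ} (hm : |m| ≤ 1) (x : ℝ) : 0 < Real.cosh x + m * Real.sinh x := by
  have h2 : |Real.sinh x| < Real.cosh x := by
    have h := Real.cosh_sq x
    have := Real.cosh_pos x
    nlinarith [abs_nonneg (Real.sinh x), sq_abs (Real.sinh x)]
  have h1 : |m * Real.sinh x| ≤ |Real.sinh x| := by
    rw [abs_mul]
    calc |m| * |Real.sinh x| ≤ 1 * |Real.sinh x| :=
          mul_le_mul_of_nonneg_right hm (abs_nonneg _)
      _ = |Real.sinh x| := one_mul _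
  have := neg_abs_le (m * Real.sinh x)
  linarith

lemma NNE_cosh_add_mul_sinh_le {m : ℝ} (hm : |m| ≤ 1) (t : ℝ) :
    Real.cosh t + m * Real.sinh t ≤ Real.exp (t * m + t ^ 2 / 2) := by
  set c : ℝ → ℝ := fun x => Real.cosh x + m * Real.sinh x with hc_def
  set s : ℝ → ℝ := fun x => Real.sinh x + m * Real.cosh x with hs_def
  have hcpos : ∀ x, 0 < c x := NNE_cosh_pos hm
  have hident : ∀ x, (c x) ^ 2 - (s x) ^ 2 = 1 - m ^ 2 := by
    intro x
    have h := Real.cosh_sq x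
    simp only [hc_def, hs_def]
    nlinarith [h]
  have hcd : ∀ x, HasDerivAt c (s x) x := by
    intro x
    exact (Real.hasDerivAt_cosh x).add ((Real.hasDerivAt_sinh x).const_mul m)
  have hsd : ∀ x, HasDerivAt s (c x) x := by
    intro x
    exact (Real.hasDerivAt_sinh x).add ((Real.hasDerivAt_cosh x).const_mul m)
  -- G x = m + x - s x / c x
  set G : ℝ → ℝ := fun x => m + x - s x / c x with hG_def
  have hGd : ∀ x, HasDerivAt G (1 - (1 - m ^ 2) / (c x) ^ 2) x := by
    intro x
    have hdiv : HasDerivAt (fun x => s x / c x) ((1 - m ^ 2) / (c x) ^ 2) x := by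
      have := (hsd x).div (hcd x) (hcpos x).ne'
      refine this.congr_deriv ?_
      rw [← hident x]
      ring
    exact (((hasDerivAt_const x m).add (hasDerivAt_id x)).sub hdiv).congr_deriv (by ring)
  have hGmono : Monotone G := by
    apply monotone_of_deriv_nonneg
    · exact fun x => (hGd x).differentiableAt
    · intro x
      rw [(hGd x).deriv]
      have h1 : (1 - m ^ 2) ≤ (c x) ^ 2 := by nlinarith [hident x, sq_nonneg (s x)]
      have h2 : (0:ℝ) < (c x) ^ 2 := pow_pos (hcpos x) 2
      have := div_le_one_of_le₀ h1 h2.le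
      linarith
  have hG0 : G 0 = 0 := by
    simp [hG_def, hs_def, hc_def]
  -- H x = x*m + x^2/2 - log (c x)
  set H : ℝ → ℝ := fun x => x * m + x ^ 2 / 2 - Real.log (c x) with hH_def
  have hHd : ∀ x, HasDerivAt H (G x) x := by
    intro x
    have hlog : HasDerivAt (fun x => Real.log (c x)) (s x / c x) x :=
      (hcd x).log (hcpos x).ne'
    have h1 : HasDerivAt (fun x => x * m + x ^ 2 / 2) (m + x) x := by
      have := ((hasDerivAt_id x).mul_const m).add
        (((hasDerivAt_id x).pow 2).div_const 2)
      exact this.congr_deriv (by norm_num [id] <;> ring)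
      -- derivative of x^2/2 is (2 * x^1 * 1)/2 = x
    exact h1.sub hlog
  have hH0 : H 0 = 0 := by simp [hH_def, hc_def]
  have hHt : 0 ≤ H t := by
    rcases le_or_gt 0 t with h | h
    · have hmono : MonotoneOn H (Set.Ici 0) := by
        apply monotoneOn_of_deriv_nonneg (convex_Ici 0)
        · exact (Continuous.continuousOn (by
            fun_prop (disch := intro x; exact (hcpos x).ne')) : ContinuousOn H _)
        · intro x _; exact (hHd x).differentiableAt.differentiableWithinAt
        · intro x hx
          rw [(hHd x).deriv]
          have : G 0 ≤ G x := hGmono (le_of_lt (by simpa using hx))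
          linarith [hG0 ▸ this]
      have := hmono Set.self_mem_Ici (Set.mem_Ici.mpr h) h
      linarith [hH0 ▸ this]
    · have hanti : AntitoneOn H (Set.Iic 0) := by
        apply antitoneOn_of_deriv_nonpos (convex_Iic 0)
        · exact (Continuous.continuousOn (by
            fun_prop (disch := intro x; exact (hcpos x).ne')) : ContinuousOn H _)
        · intro x _; exact (hHd x).differentiableAt.differentiableWithinAt
        · intro x hx
          rw [(hHd x).deriv]
          have : G x ≤ G 0 := hGmono (le_of_lt (by simpa using hx))
          linarith [hG0 ▸ this]
      have := hanti (Set.mem_Iic.mpr h.le) Set.self_mem_Iic h.le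
      linarith [hH0 ▸ this]
  have : Real.log (c t) ≤ t * m + t ^ 2 / 2 := by
    simp only [hH_def] at hHt; linarith
  calc c t = Real.exp (Real.log (c t)) := (Real.exp_log (hcpos t)).symm
    _ ≤ Real.exp (t * m + t ^ 2 / 2) := Real.exp_le_exp.mpr this

lemma NNE_mgf_le {Ω : Type*} [MeasureSpace Ω] [IsProbabilityMeasure (ℙ : Measure Ω)]
    {X : Ω → ℝ} (hX : Measurable X) (hb : ∀ᵐ ω ∂ℙ, X ω ∈ Set.Icc (-1:ℝ) 1) (t : ℝ) :
    mgf X ℙ t ≤ Real.exp (t * (∫ ω, X ω ∂ℙ) + t ^ 2 / 2) := by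
  have hXint : Integrable X ℙ := by
    apply Integrable.mono' (integrable_const 1) hX.aestronglyMeasurable
    filter_upwards [hb] with ω h
    rw [Real.norm_eq_abs]; exact abs_le.mpr ⟨h.1, h.2⟩
  set μX := ∫ ω, X ω ∂ℙ with hμX
  have hm1 : |μX| ≤ 1 := by
    have habs : |μX| ≤ ∫ ω, |X ω| ∂ℙ := by
      simpa [Real.norm_eq_abs] using norm_integral_le_integral_norm (μ := ℙ) X
    refine habs.trans ?_
    calc (∫ ω, |X ω| ∂ℙ) ≤ ∫ _ω, (1:ℝ) ∂ℙ := by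
          apply integral_mono_ae hXint.abs (integrable_const 1)
          filter_upwards [hb] with ω h
          exact abs_le.mpr ⟨h.1, h.2⟩
      _ = 1 := by simp
  have key : ∀ x : ℝ, -1 ≤ x → x ≤ 1 →
      Real.exp (t * x) ≤ Real.cosh t + x * Real.sinh t := by
    intro x h1 h2
    have h := convexOn_exp.2 (Set.mem_univ (-t)) (Set.mem_univ t)
      (show (0:ℝ) ≤ (1 - x)/2 by linarith) (show (0:ℝ) ≤ (1 + x)/2 by linarith)
      (show (1 - x)/2 + (1 + x)/2 = 1 by ring)
    simp only [smul_eq_mul] at h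
    have e1 : (1 - x)/2 * (-t) + (1 + x)/2 * t = t * x := by ring
    rw [e1] at h
    calc Real.exp (t * x) ≤ (1 - x)/2 * Real.exp (-t) + (1 + x)/2 * Real.exp t := h
      _ = Real.cosh t + x * Real.sinh t := by rw [Real.cosh_eq, Real.sinh_eq]; ring
  have hint_exp : Integrable (fun ω => Real.exp (t * X ω)) ℙ := by
    apply Integrable.mono' (integrable_const (Real.exp |t|))
      (hX.const_mul t).exp.aestronglyMeasurable
    filter_upwards [hb] with ω h
    rw [Real.norm_eq_abs, abs_of_pos (Real.exp_pos _), Real.exp_le_exp]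
    calc t * X ω ≤ |t * X ω| := le_abs_self _
      _ = |t| * |X ω| := abs_mul _ _
      _ ≤ |t| * 1 := mul_le_mul_of_nonneg_left (abs_le.mpr ⟨h.1, h.2⟩) (abs_nonneg _)
      _ = |t| := mul_one _
  have hmgf : mgf X ℙ t = ∫ ω, Real.exp (t * X ω) ∂ℙ := rfl
  rw [hmgf]
  calc ∫ ω, Real.exp (t * X ω) ∂ℙ
      ≤ ∫ ω, (Real.cosh t + X ω * Real.sinh t) ∂ℙ := by
        apply integral_mono_ae hint_exp
          ((integrable_const _).add (hXint.mul_const _))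
        filter_upwards [hb] with ω h
        exact key _ h.1 h.2
    _ = Real.cosh t + μX * Real.sinh t := by
        rw [integral_add (integrable_const _) (hXint.mul_const _),
          integral_const, integral_mul_const]
        simp [hμX]
    _ ≤ Real.exp (t * μX + t ^ 2 / 2) := NNE_cosh_add_mul_sinh_le hm1 t

lemma NNE_iIndepFun_precomp {Ω ι κ : Type*} [MeasurableSpace Ω] {μ : Measure Ω}
    {β : Type*} [mβ : MeasurableSpace β] {f : ι → Ω → β}
    (h : iIndepFun f μ) {u : κ → ι} (hu : Function.Injective u) :
    iIndepFun (fun k => f (u k)) μ := by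
  classical
  rw [iIndepFun_iff_measure_inter_preimage_eq_mul] at h ⊢
  intro S sets hsets
  have key := h (S.image u)
    (sets := Function.extend u sets fun _ => Set.univ) ?_
  · have h1 : (⋂ i ∈ S.image u, f i ⁻¹' Function.extend u sets (fun _ => Set.univ) i)
        = ⋂ k ∈ S, f (u k) ⁻¹' sets k := by
      rw [Finset.set_biInter_finset_image]
      refine Set.iInter₂_congr fun k _ => ?_
      rw [hu.extend_apply]
    have h2 : (∏ i ∈ S.image u, μ (f i ⁻¹' Function.extend u sets (fun _ => Set.univ) i))
        = ∏ k ∈ S, μ (f (u k) ⁻¹' sets k) := by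
      rw [Finset.prod_image (fun a _ b _ hab => hu hab)]
      exact Finset.prod_congr rfl fun k _ => by rw [hu.extend_apply]
    rw [← h1, ← h2]; exact key
  · intro i hi
    rcases Finset.mem_image.mp hi with ⟨k, hk, rfl⟩
    rw [hu.extend_apply]
    exact hsets k hk

lemma NNE_hoeffding {Ω ι : Type*} [MeasureSpace Ω] [IsProbabilityMeasure (ℙ : Measure Ω)]
    [Fintype ι] [Nonempty ι] (Y : ι → Ω → ℝ) (hYmeas : ∀ i, Measurable (Y i))
    (hYb : ∀ i, ∀ᵐ ω ∂ℙ, Y i ω ∈ Set.Icc (-1:ℝ) 1)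
    (hYind : iIndepFun Y ℙ) (a : ℝ) (ha : 0 < a) :
    ℙ {ω | (∑ i, ∫ ω', Y i ω' ∂ℙ) + a ≤ ∑ i, Y i ω} ≤
      ENNReal.ofReal (Real.exp (-a ^ 2 / (2 * (Fintype.card ι : ℝ)))) := by
  classical
  set m : ℝ := (Fintype.card ι : ℝ) with hm_def
  have hm : 0 < m := by
    simp only [hm_def]
    exact_mod_cast Fintype.card_pos
  set t : ℝ := a / m with ht_def
  have ht : 0 < t := div_pos ha hm
  set S : Ω → ℝ := ∑ i, Y i with hS_def
  have hSapp : ∀ ω, S ω = ∑ i, Y i ω := fun ω => by simp [hS_def]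
  have hSmeas : Measurable S := by
    have : Measurable fun ω => ∑ i, Y i ω := Finset.measurable_sum _ fun i _ => hYmeas i
    convert this using 1
    funext ω; simp [hS_def]
  set M : ℝ := ∑ i, ∫ ω', Y i ω' ∂ℙ with hM_def
  have hball : ∀ᵐ ω ∂ℙ, ∀ i, Y i ω ∈ Set.Icc (-1:ℝ) 1 := ae_all_iff.mpr hYb
  have hSb : ∀ᵐ ω ∂ℙ, S ω ≤ m := by
    filter_upwards [hball] with ω h
    rw [hSapp]
    calc ∑ i, Y i ω ≤ ∑ _i : ι, (1:ℝ) :=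
          Finset.sum_le_sum fun i _ => (h i).2
      _ = m := by simp [hm_def]
  have h_int : Integrable (fun ω => Real.exp (t * S ω)) ℙ := by
    apply Integrable.mono' (integrable_const (Real.exp (t * m)))
      (hSmeas.const_mul t).exp.aestronglyMeasurable
    filter_upwards [hSb] with ω h
    rw [Real.norm_eq_abs, abs_of_pos (Real.exp_pos _), Real.exp_le_exp]
    exact mul_le_mul_of_nonneg_left h ht.le
  have chern := measure_ge_le_exp_mul_mgf (μ := ℙ) (X := S) (M + a) ht.le h_int
  have hprod : mgf S ℙ t = ∏ i, mgf (Y i) ℙ t := hYind.mgf_sum hYmeas Finset.univ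
  have hmgf_le : mgf S ℙ t ≤ Real.exp (t * M + m * t ^ 2 / 2) := by
    rw [hprod]
    calc ∏ i, mgf (Y i) ℙ t
        ≤ ∏ i, Real.exp (t * (∫ ω', Y i ω' ∂ℙ) + t ^ 2 / 2) :=
          Finset.prod_le_prod (fun i _ => mgf_nonneg)
            (fun i _ => NNE_mgf_le (hYmeas i) (hYb i) t)
      _ = Real.exp (∑ i, (t * (∫ ω', Y i ω' ∂ℙ) + t ^ 2 / 2)) := by
          rw [Real.exp_sum]
      _ = Real.exp (t * M + m * t ^ 2 / 2) := by
          congr 1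
          rw [Finset.sum_add_distrib, ← Finset.mul_sum, ← hM_def]
          simp [hm_def]
          ring
  have hfinal : Real.exp (-t * (M + a)) * Real.exp (t * M + m * t ^ 2 / 2)
      = Real.exp (-a ^ 2 / (2 * m)) := by
    rw [← Real.exp_add]
    congr 1
    rw [ht_def]
    field_simp
    ring
  have hbound : (ℙ {ω | M + a ≤ S ω}).toReal ≤ Real.exp (-a ^ 2 / (2 * m)) := by
    calc (ℙ {ω | M + a ≤ S ω}).toReal ≤ Real.exp (-t * (M + a)) * mgf S ℙ t := chern
      _ ≤ Real.exp (-t * (M + a)) * Real.exp (t * M + m * t ^ 2 / 2) :=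
          mul_le_mul_of_nonneg_left hmgf_le (Real.exp_pos _).le
      _ = Real.exp (-a ^ 2 / (2 * m)) := hfinal
  have hset : {ω | M + a ≤ ∑ i, Y i ω} = {ω | M + a ≤ S ω} := by
    ext ω; simp [hSapp]
  rw [hM_def] at hset
  rw [hset]
  rw [← ENNReal.ofReal_toReal (measure_ne_top ℙ {ω | M + a ≤ S ω})]
  exact ENNReal.ofReal_le_ofReal hbound

lemma NNE_telescope {V : Type*} {G : SimpleGraph V} {i j : V} (w : G.Walk i j) (r : V → ℝ) :
    (w.darts.map (fun d => r d.toProd.2 - r d.toProd.1)).sum = r j - r i := by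
  induction w with
  | nil => simp
  | cons h p ih => simp [ih]

lemma NNE_pair_bound {Ω V : Type*} [MeasureSpace Ω] [IsProbabilityMeasure (ℙ : Measure Ω)]
    [Fintype V] [DecidableEq V] [LinearOrder V]
    (G : SimpleGraph V) (r : V → ℝ)
    (T : ℕ) (hT : 0 < T)
    (X : V → V → Fin T → Ω → ℝ)
    (hmeas : ∀ i j t, Measurable (X i j t))
    (hsym : ∀ i j t ω, X j i t ω = - X i j t ω)
    (hindep : iIndepFun
      (fun q : {p : V × V // G.Adj p.1 p.2 ∧ p.1 < p.2} × Fin T =>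
        X q.1.1.1 q.1.1.2 q.2) ℙ)
    (hmean : ∀ i j, G.Adj i j → ∀ t, ∫ ω, X i j t ω ∂ℙ = r j - r i)
    (hbound : ∀ i j, G.Adj i j → ∀ t, ∀ᵐ ω ∂ℙ, X i j t ω ∈ Set.Icc (-1 : ℝ) 1)
    {i j : V} (hne : i ≠ j) (w : G.Walk i j) (hpath : w.IsPath)
    (ε : ℝ) (hε : 0 < ε) :
    ℙ {ω | ε < |((w.darts.map (fun d : G.Dart =>
            (1 / (T : ℝ)) * ∑ t : Fin T, X d.toProd.1 d.toProd.2 t ω)).sum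
          - (r j - r i))|} ≤
      2 * ENNReal.ofReal (Real.exp (-(ε ^ 2 * T) / (2 * w.length))) := by
  classical
  set L : List G.Dart := w.darts with hL_def
  have hLlen : L.length = w.length := SimpleGraph.Walk.length_darts w
  have hLpos : 0 < L.length := by
    rw [hLlen]
    exact Nat.pos_of_ne_zero fun h => hne (SimpleGraph.Walk.eq_of_length_eq_zero h)
  haveI : NeZero L.length := ⟨hLpos.ne'⟩
  haveI : NeZero T := ⟨hT.ne'⟩
  set d : Fin L.length → G.Dart := fun k => L.get k with hd_def
  have hadj : ∀ k, G.Adj (d k).toProd.1 (d k).toProd.2 := fun k => (d k).adj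
  set Y : Fin L.length × Fin T → Ω → ℝ :=
    fun q => X (d q.1).toProd.1 (d q.1).toProd.2 q.2 with hY_def
  -- edge injectivity
  have hnodup : w.edges.Nodup := hpath.isTrail.edges_nodup
  have hedges : w.edges = L.map SimpleGraph.Dart.edge := rfl
  have hedge_inj : ∀ k k' : Fin L.length, (d k).edge = (d k').edge → k = k' := by
    intro k k' hkk
    have hlen2 : w.edges.length = L.length := by rw [hedges, List.length_map]
    have hget : ∀ k : Fin L.length, w.edges.get (Fin.cast hlen2.symm k) = (d k).edge := by
      intro k
      simp [hedges, hd_def, List.get_eq_getElem]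
    have hinj := List.nodup_iff_injective_get.mp hnodup
    have := hinj (a₁ := Fin.cast hlen2.symm k) (a₂ := Fin.cast hlen2.symm k')
      (by rw [hget, hget]; exact hkk)
    simpa [Fin.ext_iff] using this
  -- canonical edge map
  set e : Fin L.length → {p : V × V // G.Adj p.1 p.2 ∧ p.1 < p.2} := fun k =>
    if h : (d k).toProd.1 < (d k).toProd.2 then ⟨(d k).toProd, ⟨hadj k, h⟩⟩
    else ⟨((d k).toProd.2, (d k).toProd.1),
      ⟨(hadj k).symm, ((Ne.lt_or_gt (hadj k).ne).resolve_left h)⟩⟩ with he_def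
  have hsym2 : ∀ k, Sym2.mk (e k).val.1 (e k).val.2 = (d k).edge := by
    intro k
    rw [he_def]
    by_cases h : (d k).toProd.1 < (d k).toProd.2
    · simp only [dif_pos h]
      rfl
    · simp only [dif_neg h]
      show Sym2.mk (d k).toProd.2 (d k).toProd.1 = Sym2.mk (d k).toProd.1 (d k).toProd.2
      rw [Sym2.eq_swap]
  have he_inj : Function.Injective e := by
    intro k k' hkk
    apply hedge_inj
    rw [← hsym2, ← hsym2, hkk]
  -- independence of Y
  set u : Fin L.length × Fin T → {p : V × V // G.Adj p.1 p.2 ∧ p.1 < p.2} × Fin T :=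
    fun q => (e q.1, q.2) with hu_def
  have hu_inj : Function.Injective u := by
    intro q q' hqq
    have hqq' : (e q.1, q.2) = (e q'.1, q'.2) := hqq
    injection hqq' with h1 h2
    exact Prod.ext (he_inj h1) h2
  have hpre := NNE_iIndepFun_precomp hindep hu_inj
  set g : Fin L.length × Fin T → ℝ → ℝ := fun q x =>
    if (d q.1).toProd.1 < (d q.1).toProd.2 then x else -x with hg_def
  have hg_meas : ∀ q, Measurable (g q) := by
    intro q
    rw [hg_def]
    by_cases h : (d q.1).toProd.1 < (d q.1).toProd.2
    · simp only [if_pos h]; exact measurable_id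
    · simp only [if_neg h]; exact measurable_neg
  have hYind : iIndepFun Y ℙ := by
    have hcomp := hpre.comp g hg_meas
    have heq : (fun q => g q ∘ (fun q : {p : V × V // G.Adj p.1 p.2 ∧ p.1 < p.2} × Fin T =>
        X q.1.1.1 q.1.1.2 q.2) (u q)) = Y := by
      funext q ω
      show g q (X (e q.1).val.1 (e q.1).val.2 q.2 ω) = Y q ω
      by_cases h : (d q.1).toProd.1 < (d q.1).toProd.2
      · simp only [hg_def, he_def, dif_pos h, if_pos h, hY_def]
      · simp only [hg_def, he_def, dif_neg h, if_neg h]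
        rw [hsym]
        ring
    rw [← heq]
    exact hcomp
  have hYmeas : ∀ q, Measurable (Y q) := fun q => hmeas _ _ _
  have hYb : ∀ q, ∀ᵐ ω ∂ℙ, Y q ω ∈ Set.Icc (-1:ℝ) 1 := fun q =>
    hbound _ _ (hadj q.1) q.2
  have hYmean : ∀ q, ∫ ω, Y q ω ∂ℙ = r (d q.1).toProd.2 - r (d q.1).toProd.1 :=
    fun q => hmean _ _ (hadj q.1) q.2
  -- the mean sum
  set M : ℝ := ∑ q : Fin L.length × Fin T, ∫ ω', Y q ω' ∂ℙ with hM_def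
  have htel : ∑ k : Fin L.length, (r (d k).toProd.2 - r (d k).toProd.1) = r j - r i := by
    have h1 := NNE_telescope w r
    rw [← h1, ← Fin.sum_univ_fun_getElem L (fun dd => r dd.toProd.2 - r dd.toProd.1)]
    exact Finset.sum_congr rfl fun k _ => by simp [hd_def, List.get_eq_getElem]
  have hM : M = T * (r j - r i) := by
    rw [hM_def, Fintype.sum_prod_type]
    have hinner : ∀ k : Fin L.length, (∑ t : Fin T, ∫ ω', Y (k, t) ω' ∂ℙ)
        = (T : ℝ) * (r (d k).toProd.2 - r (d k).toProd.1) := by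
      intro k
      rw [Finset.sum_congr rfl fun t _ => hYmean (k, t)]
      simp [mul_comm]
      ring
    rw [Finset.sum_congr rfl fun k _ => hinner k, ← Finset.mul_sum, htel]
  -- sum identity
  have hsum_id : ∀ ω, ((w.darts.map (fun dd : G.Dart =>
        (1 / (T : ℝ)) * ∑ t : Fin T, X dd.toProd.1 dd.toProd.2 t ω)).sum)
      = (1 / (T : ℝ)) * ∑ q : Fin L.length × Fin T, Y q ω := by
    intro ω
    calc ((w.darts.map (fun dd : G.Dart =>
          (1 / (T : ℝ)) * ∑ t : Fin T, X dd.toProd.1 dd.toProd.2 t ω)).sum)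
        = ∑ k : Fin L.length, (1 / (T : ℝ)) * ∑ t : Fin T, Y (k, t) ω := by
          rw [← Fin.sum_univ_fun_getElem L
            (fun dd => (1 / (T : ℝ)) * ∑ t : Fin T, X dd.toProd.1 dd.toProd.2 t ω)]
          exact Finset.sum_congr rfl fun k _ => by
            simp [hY_def, hd_def, List.get_eq_getElem]
      _ = (1 / (T : ℝ)) * ∑ q : Fin L.length × Fin T, Y q ω := by
          rw [Fintype.sum_prod_type, Finset.mul_sum]
  -- event inclusion
  set a : ℝ := ε * T with ha_def
  have hT' : (0:ℝ) < T := by exact_mod_cast hT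
  have ha : 0 < a := mul_pos hε hT'
  set Sf : Ω → ℝ := fun ω => ∑ q : Fin L.length × Fin T, Y q ω with hSf_def
  set Y' : Fin L.length × Fin T → Ω → ℝ := fun q ω => -(Y q ω) with hY'_def
  have hMneg : (∑ q : Fin L.length × Fin T, ∫ ω', Y' q ω' ∂ℙ) = -M := by
    rw [hM_def, ← Finset.sum_neg_distrib]
    exact Finset.sum_congr rfl fun q _ => by rw [hY'_def]; exact integral_neg _
  have hinc : {ω | ε < |((w.darts.map (fun dd : G.Dart =>
        (1 / (T : ℝ)) * ∑ t : Fin T, X dd.toProd.1 dd.toProd.2 t ω)).sum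
      - (r j - r i))|} ⊆
      {ω | (∑ q : Fin L.length × Fin T, ∫ ω', Y q ω' ∂ℙ) + a
          ≤ ∑ q : Fin L.length × Fin T, Y q ω} ∪
      {ω | (∑ q : Fin L.length × Fin T, ∫ ω', Y' q ω' ∂ℙ) + a
          ≤ ∑ q : Fin L.length × Fin T, Y' q ω} := by
    intro ω hω
    simp only [Set.mem_setOf_eq] at hω
    have hrw : ((w.darts.map (fun dd : G.Dart =>
        (1 / (T : ℝ)) * ∑ t : Fin T, X dd.toProd.1 dd.toProd.2 t ω)).sum
      - (r j - r i)) = (1 / (T : ℝ)) * (Sf ω - M) := by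
      rw [hsum_id ω, hM, hSf_def]
      field_simp
    rw [hrw, abs_mul, abs_of_pos (by positivity : (0:ℝ) < 1 / (T:ℝ))] at hω
    have habs : a < |Sf ω - M| := by
      have h2 : ε * (T:ℝ) < (1 / T * |Sf ω - M|) * T := (mul_lt_mul_iff_left₀ hT').mpr hω
      have h3 : (1 / (T:ℝ) * |Sf ω - M|) * T = |Sf ω - M| := by field_simp
      rw [ha_def]
      linarith [h3 ▸ h2]
    rcases le_or_gt (Sf ω - M) 0 with hle | hpos
    · right
      simp only [Set.mem_setOf_eq]
      rw [abs_of_nonpos hle] at habs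
      have hsum_neg : (∑ q : Fin L.length × Fin T, Y' q ω) = -(Sf ω) := by
        simp only [hY'_def, hSf_def, Finset.sum_neg_distrib]
      rw [hMneg, hsum_neg]
      linarith
    · left
      simp only [Set.mem_setOf_eq]
      rw [abs_of_pos hpos] at habs
      have : Sf ω = ∑ q : Fin L.length × Fin T, Y q ω := rfl
      rw [← hM_def, ← this]
      linarith
  -- apply Hoeffding twice
  have hup := NNE_hoeffding Y hYmeas hYb hYind a ha
  have hY'meas : ∀ q, Measurable (Y' q) := fun q => (hYmeas q).neg
  have hY'b : ∀ q, ∀ᵐ ω ∂ℙ, Y' q ω ∈ Set.Icc (-1:ℝ) 1 := by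
    intro q
    filter_upwards [hYb q] with ω h
    simp only [hY'_def, Set.mem_Icc] at *
    constructor <;> linarith [h.1, h.2]
  have hY'ind : iIndepFun Y' ℙ := by
    have hcomp := hYind.comp (fun _ => (fun x : ℝ => -x)) (fun _ => measurable_neg)
    convert hcomp using 1
    rfl
  have hlow := NNE_hoeffding Y' hY'meas hY'b hY'ind a ha
  have hexp_eq : -a ^ 2 / (2 * (Fintype.card (Fin L.length × Fin T) : ℝ))
      = -(ε ^ 2 * T) / (2 * w.length) := by
    have hcard : (Fintype.card (Fin L.length × Fin T) : ℝ) = (L.length : ℝ) * T := by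
      simp [Fintype.card_prod]
    rw [hcard, ha_def, ← hLlen]
    have hL' : (0:ℝ) < (L.length : ℝ) := by exact_mod_cast hLpos
    field_simp
  calc ℙ {ω | ε < |((w.darts.map (fun dd : G.Dart =>
          (1 / (T : ℝ)) * ∑ t : Fin T, X dd.toProd.1 dd.toProd.2 t ω)).sum
        - (r j - r i))|}
      ≤ ℙ ({ω | (∑ q : Fin L.length × Fin T, ∫ ω', Y q ω' ∂ℙ) + a
          ≤ ∑ q : Fin L.length × Fin T, Y q ω} ∪
        {ω | (∑ q : Fin L.length × Fin T, ∫ ω', Y' q ω' ∂ℙ) + a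
          ≤ ∑ q : Fin L.length × Fin T, Y' q ω}) := measure_mono hinc
    _ ≤ ℙ {ω | (∑ q : Fin L.length × Fin T, ∫ ω', Y q ω' ∂ℙ) + a
          ≤ ∑ q : Fin L.length × Fin T, Y q ω} +
        ℙ {ω | (∑ q : Fin L.length × Fin T, ∫ ω', Y' q ω' ∂ℙ) + a
          ≤ ∑ q : Fin L.length × Fin T, Y' q ω} := measure_union_le _ _
    _ ≤ ENNReal.ofReal (Real.exp (-a ^ 2 /
          (2 * (Fintype.card (Fin L.length × Fin T) : ℝ)))) +
        ENNReal.ofReal (Real.exp (-a ^ 2 /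
          (2 * (Fintype.card (Fin L.length × Fin T) : ℝ)))) := add_le_add hup hlow
    _ = 2 * ENNReal.ofReal (Real.exp (-a ^ 2 /
          (2 * (Fintype.card (Fin L.length × Fin T) : ℝ)))) := (two_mul _).symm
    _ = 2 * ENNReal.ofReal (Real.exp (-(ε ^ 2 * T) / (2 * w.length))) := by
        rw [hexp_eq]

/-- Per-phase estimation guarantee for the NNE algorithm: on a connected graph
with `n` nodes and diameter `D`, with a fixed shortest path `π i j` for each
ordered pair of distinct nodes, if every edge is sampled `T ≥ (4D/ε²)·log(2n²/δ)`
times (samples in `[−1,1]`, oriented mean `r l − r k`, mutually independent),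
then with probability at least `1 − δ`, simultaneously for all pairs `(i,j)`,
the composed empirical path estimate is within `ε` of `r j − r i`. -/
theorem network_uniform_deviation
    {Ω V : Type*} [MeasureSpace Ω] [IsProbabilityMeasure (ℙ : Measure Ω)]
    [Fintype V] [Nonempty V] [DecidableEq V] [LinearOrder V]
    (G : SimpleGraph V) [DecidableRel G.Adj] (hconn : G.Connected)
    (D : ℕ) (hD : G.diam = D)
    (r : V → ℝ)
    (π : ∀ i j : V, i ≠ j → G.Walk i j)
    (hπ : ∀ i j (h : i ≠ j), (π i j h).length = G.dist i j)
    (T : ℕ) (hT : 0 < T)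
    (X : V → V → Fin T → Ω → ℝ)
    (hmeas : ∀ i j t, Measurable (X i j t))
    (hsym : ∀ i j t ω, X j i t ω = - X i j t ω)
    (hindep : iIndepFun
      (fun q : {p : V × V // G.Adj p.1 p.2 ∧ p.1 < p.2} × Fin T =>
        X q.1.1.1 q.1.1.2 q.2) ℙ)
    (hint : ∀ i j, G.Adj i j → ∀ t, Integrable (X i j t) ℙ)
    (hmean : ∀ i j, G.Adj i j → ∀ t, ∫ ω, X i j t ω ∂ℙ = r j - r i)
    (hbound : ∀ i j, G.Adj i j → ∀ t, ∀ᵐ ω ∂ℙ, X i j t ω ∈ Set.Icc (-1 : ℝ) 1)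
    (ε δ : ℝ) (hε : 0 < ε) (hδ : 0 < δ) (hδ1 : δ < 1)
    (hsample : (T : ℝ) ≥ (4 * D / ε ^ 2) *
      Real.log (2 * (Fintype.card V : ℝ) ^ 2 / δ)) :
    1 - ENNReal.ofReal δ ≤
      ℙ {ω | ∀ i j (h : i ≠ j),
        |((π i j h).darts.map (fun d : G.Dart =>
            (1 / (T : ℝ)) * ∑ t : Fin T, X d.toProd.1 d.toProd.2 t ω)).sum
          - (r j - r i)| ≤ ε} := by
  
  classical
  set Good : Set Ω := {ω | ∀ i j (h : i ≠ j),
        |((π i j h).darts.map (fun d : G.Dart =>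
            (1 / (T : ℝ)) * ∑ t : Fin T, X d.toProd.1 d.toProd.2 t ω)).sum
          - (r j - r i)| ≤ ε} with hGood_def
  by_cases hcase : ∀ i j : V, i = j
  · have hGood : Good = Set.univ := by
      ext ω
      simp only [hGood_def, Set.mem_setOf_eq, Set.mem_univ, iff_true]
      intro i j h
      exact absurd (hcase i j) h
    rw [hGood, measure_univ]
    exact tsub_le_self
  · push_neg at hcase
    obtain ⟨i0, j0, hij0⟩ := hcase
    set n : ℕ := Fintype.card V with hn_def
    have hn1 : 1 ≤ n := Fintype.card_pos
    have hnR : (0:ℝ) < n := by exact_mod_cast hn1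
    have hediam : G.ediam ≠ ⊤ := by
      obtain ⟨u, v, huv⟩ := SimpleGraph.exists_edist_eq_ediam_of_finite (G := G)
      rw [← huv]
      obtain ⟨p, hp⟩ := (hconn u v).exists_walk_length_eq_edist
      rw [← hp]
      exact ENat.coe_ne_top _
    have hD1 : 1 ≤ D := by
      have h1 : 1 ≤ G.dist i0 j0 := hconn.pos_dist_of_ne hij0
      have h2 : G.dist i0 j0 ≤ G.diam := SimpleGraph.dist_le_diam hediam
      rw [hD] at h2
      omega
    have hDR : (1:ℝ) ≤ (D:ℝ) := by exact_mod_cast hD1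
    set Q : ℝ := 2 * (n : ℝ) ^ 2 / δ with hQ_def
    have hQ1 : 1 < Q := by
      rw [hQ_def, lt_div_iff₀ hδ]
      have hnR' : (1:ℝ) ≤ (n:ℝ) := by exact_mod_cast hn1
      nlinarith
    have hQ0 : 0 < Q := lt_trans one_pos hQ1
    have hlogpos : 0 < Real.log Q := Real.log_pos hQ1
    -- per-pair bound
    have key : ∀ (i j : V) (h : i ≠ j),
        ℙ {ω | ε < |((π i j h).darts.map (fun d : G.Dart =>
            (1 / (T : ℝ)) * ∑ t : Fin T, X d.toProd.1 d.toProd.2 t ω)).sum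
          - (r j - r i)|} ≤ ENNReal.ofReal (δ / (n : ℝ) ^ 2) := by
      intro i j h
      have hw : (π i j h).length = G.dist i j := hπ i j h
      have hpath : (π i j h).IsPath := (π i j h).isPath_of_length_eq_dist hw
      have hpb := NNE_pair_bound G r T hT X hmeas hsym hindep hmean hbound h
        (π i j h) hpath ε hε
      refine hpb.trans ?_
      -- numeric bound
      set len : ℕ := (π i j h).length with hlen_def
      have hlen1 : 1 ≤ len := by
        rw [hw]
        exact hconn.pos_dist_of_ne h
      have hlenD : len ≤ D := by
        rw [hw, ← hD]
        exact SimpleGraph.dist_le_diam hediam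
      have hlenR : (1:ℝ) ≤ (len:ℝ) := by exact_mod_cast hlen1
      have hlenDR : (len:ℝ) ≤ (D:ℝ) := by exact_mod_cast hlenD
      have hεT : 4 * (D:ℝ) * Real.log Q ≤ ε ^ 2 * T := by
        have h1 := mul_le_mul_of_nonneg_left hsample (le_of_lt (by positivity : (0:ℝ) < ε ^ 2))
        have h2 : ε ^ 2 * (4 * (D:ℝ) / ε ^ 2 * Real.log Q) = 4 * (D:ℝ) * Real.log Q := by
          field_simp
        rw [ge_iff_le] at hsample
        calc 4 * (D:ℝ) * Real.log Q = ε ^ 2 * (4 * (D:ℝ) / ε ^ 2 * Real.log Q) := h2.symm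
          _ ≤ ε ^ 2 * T := mul_le_mul_of_nonneg_left hsample (by positivity)
      have harg : -(ε ^ 2 * (T:ℝ)) / (2 * len) ≤ -Real.log Q := by
        rw [div_le_iff₀ (by positivity : (0:ℝ) < 2 * (len:ℝ))]
        have : Real.log Q * (2 * (len:ℝ)) ≤ ε ^ 2 * T := by
          calc Real.log Q * (2 * (len:ℝ)) ≤ Real.log Q * (2 * (D:ℝ)) := by
                apply mul_le_mul_of_nonneg_left _ hlogpos.le
                linarith
            _ ≤ 4 * (D:ℝ) * Real.log Q := by nlinarith
            _ ≤ ε ^ 2 * T := hεT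
        nlinarith
      have hexp_le : Real.exp (-(ε ^ 2 * (T:ℝ)) / (2 * len)) ≤ δ / (2 * (n:ℝ) ^ 2) := by
        calc Real.exp (-(ε ^ 2 * (T:ℝ)) / (2 * len)) ≤ Real.exp (-Real.log Q) :=
              Real.exp_le_exp.mpr harg
          _ = Q⁻¹ := by rw [Real.exp_neg, Real.exp_log hQ0]
          _ = δ / (2 * (n:ℝ) ^ 2) := by
              rw [hQ_def]
              rw [inv_div]
      calc 2 * ENNReal.ofReal (Real.exp (-(ε ^ 2 * (T:ℝ)) / (2 * len)))
          ≤ 2 * ENNReal.ofReal (δ / (2 * (n:ℝ) ^ 2)) := by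
            exact mul_le_mul_right (ENNReal.ofReal_le_ofReal hexp_le) 2
        _ = ENNReal.ofReal (2 * (δ / (2 * (n:ℝ) ^ 2))) := by
            rw [ENNReal.ofReal_mul (by norm_num : (0:ℝ) ≤ 2)]
            norm_num
        _ = ENNReal.ofReal (δ / (n:ℝ) ^ 2) := by
            congr 1
            field_simp
    -- union bound
    set Bad : V × V → Set Ω := fun p =>
      if h : p.1 ≠ p.2 then {ω | ε < |((π p.1 p.2 h).darts.map (fun d : G.Dart =>
            (1 / (T : ℝ)) * ∑ t : Fin T, X d.toProd.1 d.toProd.2 t ω)).sum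
          - (r p.2 - r p.1)|} else ∅ with hBad_def
    have hsub : Goodᶜ ⊆ ⋃ p : V × V, Bad p := by
      intro ω hω
      simp only [hGood_def, Set.mem_compl_iff, Set.mem_setOf_eq, not_forall] at hω
      obtain ⟨i, j, h, hgt⟩ := hω
      rw [Set.mem_iUnion]
      refine ⟨(i, j), ?_⟩
      rw [hBad_def]
      simp only [dif_pos h]
      exact not_le.mp hgt
    have hBad_le : ∀ p : V × V, ℙ (Bad p) ≤ ENNReal.ofReal (δ / (n : ℝ) ^ 2) := by
      intro p
      rw [hBad_def]
      by_cases h : p.1 ≠ p.2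
      · simp only [dif_pos h]
        exact key p.1 p.2 h
      · simp only [dif_neg h]
        simp
    have hcompl : ℙ Goodᶜ ≤ ENNReal.ofReal δ := by
      calc ℙ Goodᶜ ≤ ℙ (⋃ p : V × V, Bad p) := measure_mono hsub
        _ ≤ ∑' p : V × V, ℙ (Bad p) := measure_iUnion_le _
        _ = ∑ p : V × V, ℙ (Bad p) := tsum_fintype _
        _ ≤ ∑ _p : V × V, ENNReal.ofReal (δ / (n : ℝ) ^ 2) :=
            Finset.sum_le_sum fun p _ => hBad_le p
        _ = (Fintype.card (V × V) : ENNReal) * ENNReal.ofReal (δ / (n : ℝ) ^ 2) := by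
            rw [Finset.sum_const, Finset.card_univ, nsmul_eq_mul]
        _ = ENNReal.ofReal ((n * n : ℕ) * (δ / (n : ℝ) ^ 2)) := by
            rw [Fintype.card_prod, ← hn_def]
            rw [ENNReal.ofReal_mul (by positivity : (0:ℝ) ≤ ((n * n : ℕ) : ℝ))]
            rw [ENNReal.ofReal_natCast]
        _ = ENNReal.ofReal δ := by
            congr 1
            push_cast
            field_simp
    have huniv : (1:ENNReal) ≤ ℙ Good + ℙ Goodᶜ := by
      rw [← measure_univ (μ := (ℙ : Measure Ω)), ← Set.union_compl_self Good]
      exact measure_union_le _ _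
    rw [tsub_le_iff_right]
    calc (1:ENNReal) ≤ ℙ Good + ℙ Goodᶜ := huniv
      _ ≤ ℙ Good + ENNReal.ofReal δ := add_le_add_right hcompl _
end

section
/- Let A₀ be a d × d real symmetric positive definite matrix and x ∈ ℝ^d. For t = 0, 1, 2, …, define A_t = A₀ + t·x·xᵀ. Then for every positive integer T, Σ_{t=1}^{T} xᵀ A_t^{−1} x ≤ log( det(A_T) / det(A₀) ). -/
open Matrix

private theorem ep_det_lemma (d : ℕ) (A : Matrix (Fin d) (Fin d) ℝ) (hA : A.PosDef)
    (x : Fin d → ℝ) (t : ℝ) :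
    (A + t • vecMulVec x x).det = A.det * (1 + t * (x ⬝ᵥ (A⁻¹ *ᵥ x))) := by
  have h1 : t • vecMulVec x x = replicateCol (Fin 1) (t • x) * replicateRow (Fin 1) x := by
    erw [← vecMulVec_eq (Fin 1)]
    ext i j
    simp [vecMulVec_apply, mul_assoc]
  erw [h1, det_add_replicateCol_mul_replicateRow ((isUnit_iff_isUnit_det A).1 hA.isUnit)]
  congr 1
  have h3 : (1 + replicateRow (Fin 1) x * A⁻¹ * replicateCol (Fin 1) (t • x) : Matrix (Fin 1) (Fin 1) ℝ) 0 0
      = 1 + t * x ⬝ᵥ A⁻¹ *ᵥ x := by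
    simp only [Matrix.add_apply, Matrix.one_apply_eq, mul_apply, dotProduct, mulVec,
      replicateRow_apply, replicateCol_apply, Pi.smul_apply, smul_eq_mul, Finset.mul_sum, Finset.sum_mul]
    rw [Finset.sum_comm]
    congr 1
    apply Finset.sum_congr rfl; intros
    apply Finset.sum_congr rfl; intros
    ring
  convert (det_eq_elem_of_subsingleton _ (0 : Fin 1)).trans h3 using 2
  ext i j
  have hij : i = j := Subsingleton.elim i j
  subst hij
  simp only [Matrix.add_apply, Matrix.one_apply_eq]

private theorem ep_smul_psd (d : ℕ) (M : Matrix (Fin d) (Fin d) ℝ) (h : M.PosSemidef)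
    (t : ℝ) (ht : 0 ≤ t) : (t • M).PosSemidef := by
  constructor
  · unfold Matrix.IsHermitian
    rw [conjTranspose_smul, h.1]
    simp
  · intro v
    exact (h.smul ht).2 v

private theorem ep_vmv_psd (d : ℕ) (x : Fin d → ℝ) : (vecMulVec x x).PosSemidef := by
  have : vecMulVec x x = (replicateRow (Fin 1) x)ᴴ * (replicateRow (Fin 1) x) := by
    erw [conjTranspose_replicateRow, vecMulVec_eq (Fin 1)]
    simp
    rfl
  rw [this]
  exact posSemidef_conjTranspose_mul_self _

private theorem ep_vmv_mulVec (d : ℕ) (x v : Fin d → ℝ) :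
    (vecMulVec x x) *ᵥ v = (x ⬝ᵥ v) • x := by
  ext i
  simp [vecMulVec_apply, mulVec, dotProduct, Finset.mul_sum, mul_comm, mul_left_comm]

private theorem ep_sum_le_log (u : ℝ) (hu : 0 ≤ u) (T : ℕ) :
    ∑ t ∈ Finset.Icc 1 T, (1 + (t : ℝ) * u)⁻¹ * u ≤ Real.log (1 + (T : ℝ) * u) := by
  induction T with
  | zero => simp
  | succ T ih =>
    rw [Finset.sum_Icc_succ_top (by omega : 1 ≤ T + 1)]
    have ha : (0:ℝ) < 1 + (T : ℝ) * u := by positivity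
    have hb : (0:ℝ) < 1 + ((T+1 : ℕ) : ℝ) * u := by positivity
    have hlog := Real.log_le_sub_one_of_pos (div_pos ha hb)
    rw [Real.log_div ha.ne' hb.ne'] at hlog
    have hba : (1 + ((T+1 : ℕ) : ℝ) * u) = (1 + (T : ℝ) * u) + u := by push_cast; ring
    have h2 : (1 + ((T+1 : ℕ) : ℝ) * u)⁻¹ * u
        ≤ Real.log (1 + ((T+1 : ℕ) : ℝ) * u) - Real.log (1 + (T : ℝ) * u) := by
      have h3 : 1 - (1 + (T : ℝ) * u) / (1 + ((T+1 : ℕ) : ℝ) * u)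
          = (1 + ((T+1 : ℕ) : ℝ) * u)⁻¹ * u := by
        rw [hba]
        field_simp
        ring
      linarith
    linarith

/-- Elliptical potential inequality: for a symmetric positive definite `A₀` and
`A t = A₀ + t·x·xᵀ`, one has `∑_{t=1}^{T} xᵀ A_t⁻¹ x ≤ log(det A_T / det A₀)`. -/
theorem elliptical_potential
    (d : ℕ) (A0 : Matrix (Fin d) (Fin d) ℝ)
    (hpos : A0.PosDef) (hsym : A0.IsSymm)
    (x : Fin d → ℝ) (T : ℕ) (hT : 0 < T) :
    ∑ t ∈ Finset.Icc 1 T,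
        x ⬝ᵥ ((A0 + (t : ℝ) • vecMulVec x x)⁻¹ *ᵥ x)
      ≤ Real.log ((A0 + (T : ℝ) • vecMulVec x x).det / A0.det) := by
  set u := x ⬝ᵥ (A0⁻¹ *ᵥ x) with hu_def
  have hu : 0 ≤ u := by
    have h := hpos.inv.posSemidef.dotProduct_mulVec_nonneg x
    simpa using h
  -- inverse action formula
  have hinv : ∀ t : ℕ, (A0 + (t:ℝ) • vecMulVec x x)⁻¹ *ᵥ x
      = (1 + (t:ℝ) * u)⁻¹ • (A0⁻¹ *ᵥ x) := by
    intro t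
    have ht0 : (0:ℝ) ≤ t := Nat.cast_nonneg t
    have hden : (0:ℝ) < 1 + (t:ℝ) * u := by positivity
    have hAt : (A0 + (t:ℝ) • vecMulVec x x).PosDef :=
      hpos.add_posSemidef (ep_smul_psd d _ (ep_vmv_psd d x) _ ht0)
    have hmul : (A0 + (t:ℝ) • vecMulVec x x) *ᵥ ((1 + (t:ℝ) * u)⁻¹ • (A0⁻¹ *ᵥ x)) = x := by
      rw [mulVec_smul, add_mulVec, smul_mulVec, ep_vmv_mulVec,
        mulVec_mulVec, Matrix.mul_nonsing_inv _ ((isUnit_iff_isUnit_det A0).1 hpos.isUnit),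
        one_mulVec]
      rw [← hu_def, smul_smul]
      rw [show x + ((t:ℝ) * u) • x = (1 + (t:ℝ) * u) • x by rw [add_smul, one_smul]]
      rw [smul_smul, inv_mul_cancel₀ hden.ne', one_smul]
    calc (A0 + (t:ℝ) • vecMulVec x x)⁻¹ *ᵥ x
        = (A0 + (t:ℝ) • vecMulVec x x)⁻¹ *ᵥ
            ((A0 + (t:ℝ) • vecMulVec x x) *ᵥ ((1 + (t:ℝ) * u)⁻¹ • (A0⁻¹ *ᵥ x))) := by
          rw [hmul]
      _ = (1 + (t:ℝ) * u)⁻¹ • (A0⁻¹ *ᵥ x) := by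
          rw [mulVec_mulVec, Matrix.nonsing_inv_mul _ ((isUnit_iff_isUnit_det _).1 hAt.isUnit),
            one_mulVec]
  have hterm : ∀ t : ℕ, x ⬝ᵥ ((A0 + (t:ℝ) • vecMulVec x x)⁻¹ *ᵥ x)
      = (1 + (t:ℝ) * u)⁻¹ * u := by
    intro t
    rw [hinv t, dotProduct_smul, ← hu_def, smul_eq_mul]
  -- determinant
  have hdet : (A0 + (T:ℝ) • vecMulVec x x).det / A0.det = 1 + (T:ℝ) * u := by
    rw [ep_det_lemma d A0 hpos x (T:ℝ), ← hu_def,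
      mul_comm, mul_div_assoc, div_self hpos.det_pos.ne', mul_one]
  rw [hdet]
  calc ∑ t ∈ Finset.Icc 1 T, x ⬝ᵥ ((A0 + (t:ℝ) • vecMulVec x x)⁻¹ *ᵥ x)
      = ∑ t ∈ Finset.Icc 1 T, (1 + (t:ℝ) * u)⁻¹ * u :=
        Finset.sum_congr rfl fun t _ => hterm t
    _ ≤ Real.log (1 + (T:ℝ) * u) := ep_sum_le_log u hu T
end
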